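/- arXiv:1610.00532 — 2 statements merged into one kernel-verified Lean document; each statement's English description precedes it below -/
import Mathlib

section
/- Let G be a finite group of order n ≥ 2, A a finite set of size q ≥ 2, and H a subgroup of G. Let μ be the Möbius function of the lattice of subgroups of G. Then |B_{[H]}| = c_H · Σ_{K ≤ G} μ(H,K) · q^{[G:K]}, where the sum runs over all subgroups K of G, [G:K] is the index of K in G, and c_H is the number of subgroups of G conjugate to H. -/
variable {G A : Type*}

/-- The right shift action of `G` on configurations `A^G`: `(x · g) h = x (h * g⁻¹)`. -/
def shift [Group G] (x : G → A) (g : G) : G → A := fun h => x (h * g⁻¹)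

/-- A transformation of the configuration space is `G`-equivariant if it commutes
with the shift action. -/
def equivariant [Group G] (τ : (G → A) → (G → A)) : Prop :=
  ∀ (x : G → A) (g : G), τ (shift x g) = shift (τ x) g

/-- The `G`-orbit of a configuration. -/
def orbit [Group G] (x : G → A) : Set (G → A) := Set.range (shift x)

/-- The stabilizer of a configuration, as a subgroup of `G`. -/
def stab [Group G] (x : G → A) : Subgroup G where
  carrier := {g : G | shift x g = x}
  one_mem' := by
    show shift x 1 = x
    funext h
    simp [shift]
  mul_mem' := by
    intro a b ha hb
    have ha' : shift x a = x := ha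
    have hb' : shift x b = x := hb
    show shift x (a * b) = x
    funext h
    show x (h * (a * b)⁻¹) = x h
    have key : h * (a * b)⁻¹ = h * b⁻¹ * a⁻¹ := by group
    rw [key]
    have h1 := congrFun ha' (h * b⁻¹)
    have h2 := congrFun hb' h
    simp only [shift] at h1 h2
    rw [h1, h2]
  inv_mem' := by
    intro a ha
    have ha' : shift x a = x := ha
    show shift x a⁻¹ = x
    funext h
    show x (h * a⁻¹⁻¹) = x h
    rw [inv_inv]
    have h1 := congrFun ha' (h * a)
    simp only [shift] at h1
    rw [mul_inv_cancel_right] at h1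
    exact h1.symm

/-- Two subgroups `H`, `K` of `G` are conjugate, namely `K = g⁻¹ * H * g` for some `g ∈ G`. -/
def conjSub [Group G] (H K : Subgroup G) : Prop :=
  ∃ g : G, ∀ a : G, a ∈ K ↔ g * a * g⁻¹ ∈ H

section Aux
variable {G A : Type*} [Group G]

lemma shift_shift (x : G → A) (g g' : G) : shift (shift x g) g' = shift x (g * g') := by
  funext h
  simp [shift, mul_assoc, mul_inv_rev]

lemma shift_one (x : G → A) : shift x 1 = x := by
  funext h; simp [shift]

lemma shift_cancel (g : G) {x y : G → A} : shift x g = shift y g ↔ x = y := by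
  constructor
  · intro h
    have := congrArg (fun z => shift z g⁻¹) h
    simpa [shift_shift, shift_one] using this
  · intro h; rw [h]

lemma mem_stab (x : G → A) (g : G) : g ∈ stab x ↔ shift x g = x := Iff.rfl

lemma mem_stab_shift (x : G → A) (g s : G) :
    s ∈ stab (shift x g) ↔ g * s * g⁻¹ ∈ stab x := by
  rw [mem_stab, mem_stab, shift_shift, ← shift_cancel g⁻¹, shift_shift, shift_shift,
    mul_inv_cancel, shift_one]

lemma stab_shift_eq {x : G → A} {g : G} {H K : Subgroup G}
    (hx : stab x = H) (hg : ∀ a : G, a ∈ K ↔ g * a * g⁻¹ ∈ H) :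
    stab (shift x g) = K := by
  ext s
  rw [mem_stab_shift, hx, ← hg]

lemma card_fixed [Fintype G] [Fintype A] (K : Subgroup G) :
    Nat.card {x : G → A // K ≤ stab x} = Fintype.card A ^ K.index := by
  classical
  have e : {x : G → A // K ≤ stab x} ≃ (G ⧸ K → A) := by
    refine ⟨fun x => Quotient.lift x.1 ?_, fun y => ⟨y ∘ QuotientGroup.mk, ?_⟩, ?_, ?_⟩
    · intro a b hab
      have hab' : a⁻¹ * b ∈ K := QuotientGroup.leftRel_apply.mp hab
      have h1 := congrFun (x.2 hab') b
      simp only [shift, mul_inv_rev, inv_inv, mul_inv_cancel_left] at h1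
      exact h1
    · intro k hk
      have : shift (y ∘ QuotientGroup.mk) k = y ∘ QuotientGroup.mk := by
        funext h
        show y (QuotientGroup.mk (h * k⁻¹)) = y (QuotientGroup.mk h)
        congr 1
        exact QuotientGroup.mk_mul_of_mem h (inv_mem hk)
      exact this
    · intro x
      exact Subtype.ext rfl
    · intro y
      funext q
      induction q using Quotient.ind
      rfl
  rw [Nat.card_congr e, Nat.card_eq_fintype_card, Fintype.card_fun]
  rw [Subgroup.index, Nat.card_eq_fintype_card]

end Aux

/-- with `μ` the Möbius function of the subgroup lattice of `G`,
`|B_{[H]}| = c_H · Σ_{K ≤ G} μ(H,K) · q^{[G:K]}`, where `c_H` is the number of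
subgroups of `G` conjugate to `H`. -/
theorem card_B_eq_moebius_sum [Group G] [Fintype G] [Fintype A]
    (hn : 2 ≤ Fintype.card G) (hq : 2 ≤ Fintype.card A)
    (μ : Subgroup G → Subgroup G → ℤ)
    (hμ_self : ∀ H : Subgroup G, μ H H = 1)
    (hμ_nle : ∀ H K : Subgroup G, ¬ H ≤ K → μ H K = 0)
    (hμ_sum : ∀ H K : Subgroup G, H < K →
      ∑ᶠ L ∈ {L : Subgroup G | H ≤ L ∧ L ≤ K}, μ H L = 0)
    (H : Subgroup G) :
    (Nat.card {x : G → A // conjSub (stab x) H} : ℤ) =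
      (Nat.card {K : Subgroup G // conjSub K H} : ℤ) *
        ∑ᶠ K : Subgroup G, μ H K * (Fintype.card A : ℤ) ^ K.index := by
  classical
  haveI : Fintype (Subgroup G) := Fintype.ofFinite _
  set f : Subgroup G → ℕ := fun K => (Finset.univ.filter fun x : G → A => stab x = K).card
    with hf
  -- Step 1: counting fixed configurations
  have step1 : ∀ K : Subgroup G, (Fintype.card A : ℤ) ^ K.index =
      ∑ L ∈ Finset.univ.filter (fun L => K ≤ L), (f L : ℤ) := by
    intro K
    have hcard : (Finset.univ.filter fun x : G → A => K ≤ stab x).card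
        = Fintype.card A ^ K.index := by
      rw [← Fintype.card_subtype, ← Nat.card_eq_fintype_card, card_fixed]
    have hfib : (Finset.univ.filter fun x : G → A => K ≤ stab x).card
        = ∑ L ∈ Finset.univ.filter (fun L => K ≤ L), f L := by
      rw [Finset.card_eq_sum_card_fiberwise (f := stab)
        (t := Finset.univ.filter (fun L => K ≤ L)) (fun x hx => by
          simp only [Finset.mem_coe, Finset.mem_filter, Finset.mem_univ, true_and] at hx ⊢; exact hx)]
      refine Finset.sum_congr rfl fun L hL => ?_
      simp only [Finset.mem_filter, Finset.mem_univ, true_and] at hL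
      congr 1
      ext x
      simp only [Finset.mem_filter, Finset.mem_univ, true_and, Finset.filter_filter]
      constructor
      · rintro ⟨-, h⟩; exact h
      · intro h; exact ⟨hL.trans h.ge, h⟩
    have := hcard.symm.trans hfib
    exact_mod_cast congrArg (fun n : ℕ => (n : ℤ)) this
  -- Step 2: Möbius inversion
  have hsplit : ∀ L : Subgroup G,
      (∑ K ∈ Finset.univ.filter (fun K => K ≤ L), μ H K)
        = ∑ K ∈ Finset.univ.filter (fun K => H ≤ K ∧ K ≤ L), μ H K := by
    intro L
    rw [Finset.sum_filter, Finset.sum_filter]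
    refine Finset.sum_congr rfl fun K _ => ?_
    by_cases h1 : K ≤ L <;> by_cases h2 : H ≤ K <;>
      simp [h1, h2, hμ_nle H K]
  have inner : ∀ L : Subgroup G,
      (∑ K ∈ Finset.univ.filter (fun K => K ≤ L), μ H K) = if L = H then 1 else 0 := by
    intro L
    rw [hsplit L]
    by_cases hHL : H ≤ L
    · rcases eq_or_lt_of_le hHL with heq | hlt
      · rw [if_pos heq.symm]
        have hset : Finset.univ.filter (fun K => H ≤ K ∧ K ≤ L) = {H} := by
          ext K
          simp only [Finset.mem_filter, Finset.mem_univ, true_and, Finset.mem_singleton]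
          constructor
          · rintro ⟨h1, h2⟩; exact le_antisymm (heq ▸ h2) h1
          · rintro rfl; exact ⟨le_rfl, hHL⟩
        rw [hset, Finset.sum_singleton, hμ_self]
      · rw [if_neg (ne_of_gt hlt)]
        have h0 := hμ_sum H L hlt
        have hset : {K : Subgroup G | H ≤ K ∧ K ≤ L}
            = ↑(Finset.univ.filter (fun K => H ≤ K ∧ K ≤ L)) := by
          ext K; simp
        rw [hset, finsum_mem_coe_finset] at h0
        exact h0
    · rw [if_neg (fun h => hHL (le_of_eq h.symm))]
      have hset : Finset.univ.filter (fun K : Subgroup G => H ≤ K ∧ K ≤ L) = ∅ := by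
        ext K
        simp only [Finset.mem_filter, Finset.mem_univ, true_and, Finset.notMem_empty,
          iff_false, not_and]
        intro h1 h2
        exact hHL (h1.trans h2)
      rw [hset, Finset.sum_empty]
  have step2 : (∑ K : Subgroup G, μ H K * (Fintype.card A : ℤ) ^ K.index) = (f H : ℤ) := by
    calc ∑ K : Subgroup G, μ H K * (Fintype.card A : ℤ) ^ K.index
        = ∑ K : Subgroup G, ∑ L ∈ Finset.univ.filter (fun L => K ≤ L),
            μ H K * (f L : ℤ) := by
          refine Finset.sum_congr rfl fun K _ => ?_
          rw [step1 K, Finset.mul_sum]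
      _ = ∑ K : Subgroup G, ∑ L : Subgroup G,
            if K ≤ L then μ H K * (f L : ℤ) else 0 := by
          refine Finset.sum_congr rfl fun K _ => ?_
          rw [Finset.sum_filter]
      _ = ∑ L : Subgroup G, ∑ K : Subgroup G,
            if K ≤ L then μ H K * (f L : ℤ) else 0 := Finset.sum_comm
      _ = ∑ L : Subgroup G,
            (∑ K ∈ Finset.univ.filter (fun K => K ≤ L), μ H K) * (f L : ℤ) := by
          refine Finset.sum_congr rfl fun L _ => ?_
          rw [Finset.sum_mul, Finset.sum_filter]
      _ = ∑ L : Subgroup G, (if L = H then 1 else 0) * (f L : ℤ) := by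
          refine Finset.sum_congr rfl fun L _ => ?_
          rw [inner L]
      _ = (f H : ℤ) := by simp
  -- Step 3: f is constant on the conjugacy class of H
  have step3 : ∀ K : Subgroup G, conjSub K H → f K = f H := by
    rintro K ⟨g, hg⟩
    refine Finset.card_bij (fun (x : G → A) _ => shift x g) ?_ ?_ ?_
    · intro x hx
      simp only [Finset.mem_filter, Finset.mem_univ, true_and] at hx ⊢
      exact stab_shift_eq hx hg
    · intro x _ y _ hxy
      exact (shift_cancel g).mp hxy
    · intro y hy
      simp only [Finset.mem_filter, Finset.mem_univ, true_and] at hy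
      refine ⟨shift y g⁻¹, ?_, ?_⟩
      · simp only [Finset.mem_filter, Finset.mem_univ, true_and]
        ext s
        rw [mem_stab_shift, hy, hg (g⁻¹ * s * g⁻¹⁻¹)]
        have hgs : g * (g⁻¹ * s * g⁻¹⁻¹) * g⁻¹ = s := by group
        rw [hgs]
      · show shift (shift y g⁻¹) g = y
        rw [shift_shift, inv_mul_cancel, shift_one]
  -- Step 4: group the configurations by their stabilizer
  set t : Finset (Subgroup G) := Finset.univ.filter (fun K => conjSub K H) with ht
  have hLHS : Nat.card {x : G → A // conjSub (stab x) H} = t.card * f H := by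
    rw [Nat.card_eq_fintype_card, Fintype.card_subtype]
    rw [Finset.card_eq_sum_card_fiberwise (f := stab) (t := t) (fun x hx => by
      simp only [ht, Finset.mem_coe, Finset.mem_filter, Finset.mem_univ, true_and] at hx ⊢
      exact hx)]
    rw [Finset.sum_congr rfl (fun K hK => ?_), Finset.sum_const, smul_eq_mul]
    simp only [ht, Finset.mem_filter, Finset.mem_univ, true_and] at hK
    rw [← step3 K hK]
    congr 1
    ext x
    simp only [Finset.filter_filter, Finset.mem_filter, Finset.mem_univ, true_and]
    constructor
    · rintro ⟨-, h⟩; exact h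
    · intro h; exact ⟨h.symm ▸ hK, h⟩
  have hcH : Nat.card {K : Subgroup G // conjSub K H} = t.card := by
    rw [Nat.card_eq_fintype_card, Fintype.card_subtype]
  rw [finsum_eq_sum_of_fintype, step2, hLHS, hcH]
  push_cast
  ring
end

section
/- Let G be a finite group of order n ≥ 2, A a finite set of size q ≥ 2, and let p be the smallest prime dividing n. Then, as integers, q^n − (n−1)·q^{n/p} ≤ ac(G;A), where ac(G;A) is the number of configurations in A^G with trivial stabilizer. -/
variable {G A : Type*}

/-- Two subgroups `H`, `K` of `G` are conjugate, namely `K = g⁻¹ * H * g` for some `g ∈ G`. -/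

lemma mem_stab_iff [Group G] (x : G → A) (a : G) : a ∈ stab x ↔ shift x a = x := Iff.rfl

open Classical in
lemma fix_card_le [Group G] [Fintype G] [Fintype A] (g : G) (hg : g ≠ 1)
    (hq : 1 ≤ Fintype.card A) :
    (Finset.univ.filter (fun x : G → A => shift x g = x)).card ≤
      Fintype.card A ^ (Fintype.card G / (Fintype.card G).minFac) := by
  classical
  set H := Subgroup.zpowers g with hH
  have key : ∀ x : G → A, shift x g = x → ∀ a ∈ H, ∀ h : G, x (h * a) = x h := by
    intro x hx a ha h
    have hgx : g ∈ stab x := (mem_stab_iff x g).2 hx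
    have hax : a⁻¹ ∈ stab x := by
      obtain ⟨k, rfl⟩ := ha
      exact (stab x).inv_mem ((stab x).zpow_mem hgx k)
    have := congrFun ((mem_stab_iff x a⁻¹).1 hax) h
    simpa [shift] using this
  -- injection into functions on the quotient
  have hinj : Set.InjOn (fun (x : G → A) => (fun c : G ⧸ H => x c.out))
      ↑(Finset.univ.filter (fun x : G → A => shift x g = x)) := by
    intro x hx y hy hxy
    simp only [Finset.coe_filter, Set.mem_setOf_eq] at hx hy
    funext h
    have h1 : x h = x ((QuotientGroup.mk h : G ⧸ H).out) := by
      have hq : (QuotientGroup.mk ((QuotientGroup.mk h : G ⧸ H).out) : G ⧸ H)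
          = QuotientGroup.mk h := QuotientGroup.out_eq' _
      have hmem : h⁻¹ * (QuotientGroup.mk h : G ⧸ H).out ∈ H :=
        (QuotientGroup.eq).1 hq.symm
      have := key x hx.2 _ hmem h
      simpa [mul_assoc] using this.symm
    have h2 : y h = y ((QuotientGroup.mk h : G ⧸ H).out) := by
      have hq : (QuotientGroup.mk ((QuotientGroup.mk h : G ⧸ H).out) : G ⧸ H)
          = QuotientGroup.mk h := QuotientGroup.out_eq' _
      have hmem : h⁻¹ * (QuotientGroup.mk h : G ⧸ H).out ∈ H :=
        (QuotientGroup.eq).1 hq.symm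
      have := key y hy.2 _ hmem h
      simpa [mul_assoc] using this.symm
    rw [h1, h2]
    exact congrFun hxy _
  have hcard1 : (Finset.univ.filter (fun x : G → A => shift x g = x)).card ≤
      Fintype.card A ^ (Fintype.card (G ⧸ H)) := by
    have := Finset.card_le_card_of_injOn (fun (x : G → A) => (fun c : G ⧸ H => x c.out))
      (fun x _ => Finset.mem_univ _) hinj
    simpa [Fintype.card_fun] using this
  refine hcard1.trans ?_
  apply Nat.pow_le_pow_right hq
  -- card of quotient = card G / orderOf g ≤ card G / minFac
  have horder : orderOf g ∣ Fintype.card G := orderOf_dvd_card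
  have h2o : 2 ≤ orderOf g := by
    have h1 : orderOf g ≠ 1 := by simpa [orderOf_eq_one_iff] using hg
    have h0 : orderOf g ≠ 0 := (orderOf_pos g).ne'
    omega
  have hmin : (Fintype.card G).minFac ≤ orderOf g := Nat.minFac_le_of_dvd h2o horder
  have hquot : Fintype.card (G ⧸ H) = Fintype.card G / orderOf g := by
    have h1 : Nat.card H * H.index = Nat.card G := Subgroup.card_mul_index H
    have h2 : Nat.card H = orderOf g := Nat.card_zpowers g
    have h3 : Fintype.card (G ⧸ H) = H.index := by
      rw [← Nat.card_eq_fintype_card]; rfl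
    rw [h3]
    have hmul : orderOf g * H.index = Fintype.card G := by
      rw [← h2, h1, Nat.card_eq_fintype_card]
    have hpos : 0 < orderOf g := orderOf_pos g
    rw [← hmul, Nat.mul_div_cancel_left _ hpos]
  rw [hquot]
  exact Nat.div_le_div_left hmin (Nat.minFac_pos _)

/-- lower bound on aperiodic configurations: with `n = |G| ≥ 2`,
`q = |A| ≥ 2` and `p` the smallest prime dividing `n`,
`q^n − (n−1)·q^{n/p} ≤ ac(G;A)`. -/
theorem ac_lower_bound [Group G] [Fintype G] [Fintype A]
    (hn : 2 ≤ Fintype.card G) (hq : 2 ≤ Fintype.card A) :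
    (Fintype.card A : ℤ) ^ (Fintype.card G) -
        (Fintype.card G - 1) *
          (Fintype.card A : ℤ) ^ (Fintype.card G / (Fintype.card G).minFac) ≤
      (Nat.card {x : G → A // stab x = ⊥} : ℤ) := by
  classical
  set n := Fintype.card G with hn'
  set q := Fintype.card A with hq'
  set p := n.minFac with hp'
  set F := Finset.univ.filter (fun x : G → A => ¬ stab x = ⊥) with hF
  have hsub : F ⊆ (Finset.univ.erase (1 : G)).biUnion
      (fun g => Finset.univ.filter (fun x : G → A => shift x g = x)) := by
    intro x hx
    simp only [hF, Finset.mem_filter, Finset.mem_univ, true_and] at hx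
    have : ∃ g ∈ stab x, g ≠ 1 := by
      by_contra hcon
      push_neg at hcon
      exact hx ((Subgroup.eq_bot_iff_forall _).2 hcon)
    obtain ⟨g, hg1, hg2⟩ := this
    refine Finset.mem_biUnion.2 ⟨g, Finset.mem_erase.2 ⟨hg2, Finset.mem_univ _⟩, ?_⟩
    simp only [Finset.mem_filter, Finset.mem_univ, true_and]
    exact (mem_stab_iff x g).1 hg1
  have hFcard : F.card ≤ (n - 1) * q ^ (n / p) := by
    calc F.card ≤ ((Finset.univ.erase (1 : G)).biUnion
        (fun g => Finset.univ.filter (fun x : G → A => shift x g = x))).card :=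
          Finset.card_le_card hsub
      _ ≤ ∑ g ∈ Finset.univ.erase (1 : G),
            (Finset.univ.filter (fun x : G → A => shift x g = x)).card :=
          Finset.card_biUnion_le
      _ ≤ ∑ _g ∈ Finset.univ.erase (1 : G), q ^ (n / p) := by
          refine Finset.sum_le_sum ?_
          intro g hg
          exact fix_card_le g (Finset.mem_erase.1 hg).1 (by omega)
      _ = (n - 1) * q ^ (n / p) := by
          rw [Finset.sum_const, smul_eq_mul, Finset.card_erase_of_mem (Finset.mem_univ _),
            Finset.card_univ]
  have hsplit : (Finset.univ.filter (fun x : G → A => stab x = ⊥)).card + F.card = q ^ n := by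
    rw [hF, Finset.card_filter_add_card_filter_not, Finset.card_univ,
      Fintype.card_fun]
  have hNat : Nat.card {x : G → A // stab x = ⊥}
      = (Finset.univ.filter (fun x : G → A => stab x = ⊥)).card := by
    rw [Nat.card_eq_fintype_card, Fintype.card_subtype]
  rw [hNat]
  have h1 : ((n - 1 : ℕ) : ℤ) = (n : ℤ) - 1 := by
    have : 1 ≤ n := by omega
    push_cast [this]; ring
  have h2 : (F.card : ℤ) ≤ ((n : ℤ) - 1) * (q : ℤ) ^ (n / p) := by
    calc (F.card : ℤ) ≤ (((n - 1) * q ^ (n / p) : ℕ) : ℤ) := by exact_mod_cast hFcard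
      _ = ((n : ℤ) - 1) * (q : ℤ) ^ (n / p) := by push_cast [h1]; ring
  have h3 : ((Finset.univ.filter (fun x : G → A => stab x = ⊥)).card : ℤ)
      = (q : ℤ) ^ n - (F.card : ℤ) := by
    have h' : ((Finset.univ.filter (fun x : G → A => stab x = ⊥)).card : ℤ)
        + (F.card : ℤ) = (q : ℤ) ^ n := by exact_mod_cast hsplit
    linarith
  rw [h3]
  linarith
end
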